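/- Let P(z) = a_n zⁿ + ⋯ + a₀ be a polynomial with real coefficients, n ≥ 1 and a_n > 0, and set A(z) = P(e^z). Then there exists a constant C > 0 such that every nontrivial real solution f of f'' + A(z)f = 0 satisfies n([0, r), f) ≥ C e^{nr/2} for all sufficiently large r, where n([0, r), f) denotes the number of zeros of f on the interval [0, r). -/

import Mathlib

open Complex MeasureTheory Filter Metric Real
open scoped ENNReal Classical

noncomputable section

/-- The positive part of the logarithm, `log⁺ x = max (log x) 0`. -/
def plog (x : ℝ) : ℝ := max (Real.log x) 0

/-- The Nevanlinna proximity function `m(r, g)`. -/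
def prox (g : ℂ → ℂ) (r : ℝ) : ℝ :=
  (2 * π)⁻¹ * ∫ θ in (0:ℝ)..(2 * π),
    plog ‖g ((r : ℂ) * Complex.exp ((θ : ℂ) * Complex.I))‖

/-- The integrated counting function of the set of points `Z` (each point counted once). -/
def Ncnt (Z : Set ℂ) (r : ℝ) : ℝ :=
  ∫ t in (1:ℝ)..r, ((Z ∩ Metric.closedBall (0:ℂ) t).ncard : ℝ) / t

/-- The maximum modulus `M(r, f)`. -/
def maxMod (f : ℂ → ℂ) (r : ℝ) : ℝ :=
  sSup ((fun z => ‖f z‖) '' Metric.sphere (0:ℂ) r)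

/-- The order of growth `ρ(f) = limsup_{r→∞} log log M(r,f) / log r`. -/
def growthOrder (f : ℂ → ℂ) : ℝ≥0∞ :=
  Filter.limsup (fun r : ℝ =>
    ENNReal.ofReal (Real.log (Real.log (maxMod f r)) / Real.log r)) Filter.atTop

/-- The exponent of convergence of the nonzero zeros of `f`: the infimum of
all `s > 0` with `∑ |z_k|^{-s} < ∞`, the sum running over the nonzero zeros of `f`. -/
def convExp (f : ℂ → ℂ) : ℝ≥0∞ :=
  sInf (ENNReal.ofReal '' {s : ℝ | 0 < s ∧
    Summable fun z : {z : ℂ // f z = 0 ∧ z ≠ 0} => ‖(z : ℂ)‖ ^ (-s)})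

/-- Exponential polynomials `∑ P_j(z) e^{Q_j(z)}`. -/
def IsExpPoly (A : ℂ → ℂ) : Prop :=
  ∃ (k : ℕ) (P Q : Fin k → Polynomial ℂ),
    ∀ z, A z = ∑ j, (P j).eval z * Complex.exp ((Q j).eval z)

/-- The circumference of the convex hull of a bounded set `W ⊆ ℂ`, via Cauchy's
formula: the integral over directions of the support function of `W`. -/
def hullPerimeter (W : Set ℂ) : ℝ :=
  ∫ θ in (0:ℝ)..(2 * π),
    sSup ((fun w => (w * Complex.exp (-(θ : ℂ) * Complex.I)).re) '' W)

/-- The Phragmén–Lindelöf indicator function of `f` with exponent `ρ`. -/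
def plIndicator (ρ : ℝ) (f : ℂ → ℂ) (θ : ℝ) : ℝ :=
  Filter.limsup (fun r : ℝ =>
    Real.log ‖f ((r : ℂ) * Complex.exp ((θ : ℂ) * Complex.I))‖ / r ^ ρ)
    Filter.atTop


lemma aux_aeval_ofReal (P : Polynomial ℝ) (t : ℝ) :
    Polynomial.aeval (t : ℂ) P = ((P.eval t : ℝ) : ℂ) := by
  have : (t : ℂ) = algebraMap ℝ ℂ t := rfl
  rw [this, Polynomial.aeval_algebraMap_apply]
  simp

lemma aux_poly_lower (P : Polynomial ℝ) (hlead : 0 < P.leadingCoeff) :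
    ∀ᶠ x : ℝ in atTop,
      P.leadingCoeff / 2 * Real.exp ((P.natDegree : ℝ) * x) ≤ P.eval (Real.exp x) := by
  have h := P.isEquivalent_atTop_lead
  have h2 := h.def (c := 1/2) (by norm_num)
  have h3 : ∀ᶠ t : ℝ in atTop,
      P.leadingCoeff / 2 * t ^ P.natDegree ≤ P.eval t := by
    filter_upwards [h2, eventually_ge_atTop (0:ℝ)] with t ht ht0
    have hn : ‖P.leadingCoeff * t ^ P.natDegree‖ = P.leadingCoeff * t ^ P.natDegree := by
      rw [Real.norm_eq_abs, _root_.abs_of_nonneg (by positivity)]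
    rw [hn] at ht
    have := abs_le.mp (by rwa [Real.norm_eq_abs] at ht)
    simp only [Pi.sub_apply] at this
    nlinarith [this.1]
  have h4 := (Real.tendsto_exp_atTop.eventually h3)
  filter_upwards [h4] with x hx
  calc P.leadingCoeff / 2 * Real.exp ((P.natDegree : ℝ) * x)
      = P.leadingCoeff / 2 * (Real.exp x) ^ P.natDegree := by
        rw [← Real.exp_nat_mul]
    _ ≤ P.eval (Real.exp x) := hx

lemma aux_sturm_pos (g g' q : ℝ → ℝ)
    (hg : ∀ x, HasDerivAt g (g' x) x)
    (hg' : ∀ x, HasDerivAt g' (-(q x * g x)) x)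
    (a k : ℝ) (hk : 0 < k)
    (hq : ∀ x ∈ Set.Icc a (a + π / k), k ^ 2 ≤ q x)
    (hpos : ∀ x ∈ Set.Icc a (a + π / k), 0 < g x) : False := by
  have hπ := Real.pi_pos
  set b := a + π / k with hb
  have hab : a ≤ b := by
    rw [hb]; nlinarith [div_pos hπ hk]
  have hkb : k * (b - a) = π := by
    rw [hb]; field_simp; ring
  set W : ℝ → ℝ := fun x => g x * (k * Real.cos (k * (x - a))) - g' x * Real.sin (k * (x - a))
    with hW
  have hlin : ∀ x : ℝ, HasDerivAt (fun y => k * (y - a)) k x := by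
    intro x
    simpa using ((hasDerivAt_id x).sub_const a).const_mul k
  have hWd : ∀ x, HasDerivAt W ((q x - k ^ 2) * g x * Real.sin (k * (x - a))) x := by
    intro x
    have hv : HasDerivAt (fun y => Real.sin (k * (y - a))) (Real.cos (k * (x - a)) * k) x :=
      (hlin x).sin
    have hv' : HasDerivAt (fun y => k * Real.cos (k * (y - a)))
        ((-Real.sin (k * (x - a)) * k) * k) x := by
      simpa [mul_comm, mul_assoc, mul_left_comm] using ((hlin x).cos.const_mul k)
    have h := ((hg x).mul hv').sub ((hg' x).mul hv)
    refine h.congr_deriv ?_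
    ring
  have hmono : MonotoneOn W (Set.Icc a b) := by
    apply monotoneOn_of_deriv_nonneg (convex_Icc a b)
      (fun x _ => (hWd x).continuousAt.continuousWithinAt)
      (fun x _ => (hWd x).differentiableAt.differentiableWithinAt)
    intro x hx
    rw [interior_Icc] at hx
    rw [(hWd x).deriv]
    have hx' : x ∈ Set.Icc a b := ⟨hx.1.le, hx.2.le⟩
    have hsin : 0 ≤ Real.sin (k * (x - a)) := by
      apply Real.sin_nonneg_of_nonneg_of_le_pi
      · nlinarith [hx.1]
      · nlinarith [hx.2]
    have h1 := hq x hx'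
    have h2 := hpos x hx'
    exact mul_nonneg (mul_nonneg (by linarith) h2.le) hsin
  have hWab := hmono (Set.left_mem_Icc.mpr hab) (Set.right_mem_Icc.mpr hab) hab
  have hWa : W a = k * g a := by
    simp [hW, mul_comm]
  have hWb : W b = -(k * g b) := by
    rw [hW]
    simp only [hkb, Real.sin_pi, Real.cos_pi]
    ring
  have hga := hpos a (Set.left_mem_Icc.mpr hab)
  have hgb := hpos b (Set.right_mem_Icc.mpr hab)
  rw [hWa, hWb] at hWab
  nlinarith

lemma aux_sturm (g g' q : ℝ → ℝ)
    (hg : ∀ x, HasDerivAt g (g' x) x)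
    (hg' : ∀ x, HasDerivAt g' (-(q x * g x)) x)
    (a k : ℝ) (hk : 0 < k)
    (hq : ∀ x ∈ Set.Icc a (a + π / k), k ^ 2 ≤ q x) :
    ∃ x, x ∈ Set.Icc a (a + π / k) ∧ g x = 0 := by
  have hπ := Real.pi_pos
  set b := a + π / k with hb
  have hab : a ≤ b := by rw [hb]; nlinarith [div_pos hπ hk]
  by_contra h
  push_neg at h
  have hcont : ContinuousOn g (Set.Icc a b) := fun x _ => (hg x).continuousAt.continuousWithinAt
  have hsign : (∀ x ∈ Set.Icc a b, 0 < g x) ∨ (∀ x ∈ Set.Icc a b, g x < 0) := by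
    rcases lt_or_gt_of_ne (h a (Set.left_mem_Icc.mpr hab)) with hlt | hgt
    · right
      intro x hx
      rcases lt_or_gt_of_ne (h x hx) with h1 | h1
      · exact h1
      · exfalso
        have hsub : Set.Icc a x ⊆ Set.Icc a b := Set.Icc_subset_Icc le_rfl hx.2
        have := intermediate_value_Icc hx.1 (hcont.mono hsub)
        have h0 : (0:ℝ) ∈ Set.Icc (g a) (g x) := ⟨hlt.le, h1.le⟩
        obtain ⟨c, hc, hc0⟩ := this h0
        exact h c (hsub hc) hc0
    · left
      intro x hx
      rcases lt_or_gt_of_ne (h x hx) with h1 | h1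
      · exfalso
        have hsub : Set.Icc a x ⊆ Set.Icc a b := Set.Icc_subset_Icc le_rfl hx.2
        have := intermediate_value_Icc' hx.1 (hcont.mono hsub)
        have h0 : (0:ℝ) ∈ Set.Icc (g x) (g a) := ⟨h1.le, hgt.le⟩
        obtain ⟨c, hc, hc0⟩ := this h0
        exact h c (hsub hc) hc0
      · exact h1
  rcases hsign with hs | hs
  · exact aux_sturm_pos g g' q hg hg' a k hk hq hs
  · apply aux_sturm_pos (fun x => -g x) (fun x => -g' x) q
      (fun x => (hg x).neg) ?_ a k hk hq ?_
    · intro x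
      have := (hg' x).neg
      refine this.congr_deriv ?_
      ring
    · intro x hx
      simpa using hs x hx

lemma aux_zeros_finite (f : ℂ → ℂ) (hf : Differentiable ℂ f) (hne : f ≠ 0) (r : ℝ) :
    {x : ℝ | x ∈ Set.Ico 0 r ∧ f (x : ℂ) = 0}.Finite := by
  by_contra hinf
  replace hinf : {x : ℝ | x ∈ Set.Ico 0 r ∧ f (x : ℂ) = 0}.Infinite := hinf
  set S := {x : ℝ | x ∈ Set.Ico 0 r ∧ f (x : ℂ) = 0} with hS
  have hSsub : S ⊆ Set.Icc 0 r := fun x hx => ⟨hx.1.1, hx.1.2.le⟩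
  obtain ⟨x₀, _, hacc⟩ := hinf.exists_accPt_of_subset_isCompact isCompact_Icc hSsub
  rw [accPt_iff_frequently] at hacc
  have hfreq : ∃ᶠ z in nhds (x₀ : ℂ), z ≠ (x₀ : ℂ) ∧ f z = 0 := by
    have htend : Tendsto (fun y : ℝ => (y : ℂ)) (nhds x₀) (nhds (x₀ : ℂ)) :=
      (Complex.continuous_ofReal.tendsto x₀)
    apply htend.frequently
    apply hacc.mono
    intro y hy
    exact ⟨by simpa [Complex.ofReal_inj] using hy.1, hy.2.2⟩
  have hfreq' : ∃ᶠ z in nhdsWithin (x₀ : ℂ) {(x₀:ℂ)}ᶜ, f z = 0 := by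
    rw [frequently_nhdsWithin_iff]
    apply hfreq.mono
    intro z hz
    exact ⟨hz.2, hz.1⟩
  have hana : AnalyticAt ℂ f (x₀ : ℂ) := hf.analyticAt _
  have hev : ∀ᶠ z in nhds (x₀ : ℂ), f z = 0 :=
    hana.frequently_zero_iff_eventually_zero.mp hfreq'
  have hall : Set.EqOn f 0 Set.univ := by
    apply AnalyticOnNhd.eqOn_zero_of_preconnected_of_eventuallyEq_zero
      (hf.differentiableOn.analyticOnNhd isOpen_univ) isPreconnected_univ
      (Set.mem_univ (x₀ : ℂ))
    exact hev
  exact hne (funext fun z => hall (Set.mem_univ z))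



/-- Let `P(z) = a_n zⁿ + ⋯ + a₀` be a real polynomial with `n ≥ 1` and
`a_n > 0`, and `A(z) = P(e^z)`. Then there is a constant `C > 0` such that every
nontrivial real entire solution `f` of `f'' + A f = 0` (real-valued on the real axis)
satisfies `n([0, r), f) ≥ C e^{nr/2}` for all sufficiently large `r`, where
`n([0, r), f)` is the number of zeros of `f` on `[0, r)` (they are simple, as `f` solves
a second-order linear ODE, so no multiplicities are needed). -/
theorem stmt13 (P : Polynomial ℝ) (hdeg : 1 ≤ P.natDegree) (hlead : 0 < P.leadingCoeff)
    (A : ℂ → ℂ) (hA : ∀ z, A z = Polynomial.aeval (Complex.exp z) P) :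
    ∃ C > (0 : ℝ), ∀ f : ℂ → ℂ, Differentiable ℂ f → f ≠ 0 →
      (∀ z, deriv (deriv f) z + A z * f z = 0) →
      (∀ x : ℝ, (f (x : ℂ)).im = 0) →
      ∀ᶠ r : ℝ in atTop,
        C * Real.exp ((P.natDegree : ℝ) * r / 2) ≤
          ({x : ℝ | x ∈ Set.Ico 0 r ∧ f (x : ℂ) = 0}.ncard : ℝ) := by
  classical
  have hπ := Real.pi_pos
  set n := P.natDegree with hn
  set c := P.leadingCoeff with hc
  have hn1 : (1:ℝ) ≤ (n:ℝ) := by exact_mod_cast hdeg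
  obtain ⟨x₀, hx₀⟩ : ∃ x₀ : ℝ, ∀ x ≥ x₀,
      c / 2 * Real.exp ((n : ℝ) * x) ≤ P.eval (Real.exp x) :=
    eventually_atTop.mp (aux_poly_lower P hlead)
  set x₁ := max x₀ 0 with hx₁def
  set k0 := Real.sqrt (c / 2) with hk0def
  have hk0 : 0 < k0 := Real.sqrt_pos.mpr (by linarith)
  refine ⟨k0 * Real.exp (-(n:ℝ)/2) / (8 * π), by positivity, ?_⟩
  intro f hf hfne hode him
  have htends : Tendsto (fun r : ℝ => k0 * Real.exp ((n:ℝ) * (r - 1) / 2)) atTop atTop := by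
    apply Tendsto.const_mul_atTop hk0
    apply Real.tendsto_exp_atTop.comp
    apply Tendsto.atTop_div_const (by norm_num : (0:ℝ) < 2)
    apply Tendsto.const_mul_atTop (by linarith : (0:ℝ) < (n:ℝ))
    exact tendsto_atTop_add_const_right atTop (-1) tendsto_id |>.congr
      (fun r => by simp [sub_eq_add_neg, add_comm])
  filter_upwards [eventually_ge_atTop (x₁ + 1), htends.eventually_ge_atTop (4 * π)]
    with r hr1 hr2
  set a := r - 1 with hadef
  have ha1 : x₁ ≤ a := by rw [hadef]; linarith
  have ha0 : (0:ℝ) ≤ a := le_trans (le_max_right x₀ 0) ha1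
  set k := k0 * Real.exp ((n:ℝ) * a / 2) with hkdef
  have hk : 0 < k := by positivity
  have hr2' : 4 * π ≤ k := hr2
  have hπk : 0 < π / k := by positivity
  have hksq : k ^ 2 = c / 2 * Real.exp ((n:ℝ) * a) := by
    rw [hkdef, mul_pow, hk0def, Real.sq_sqrt (by linarith : (0:ℝ) ≤ c/2), sq, ← Real.exp_add]
    have : (n:ℝ) * a / 2 + (n:ℝ) * a / 2 = (n:ℝ) * a := by ring
    rw [this]
  set q : ℝ → ℝ := fun x => P.eval (Real.exp x) with hqdef
  set g : ℝ → ℝ := fun x => (f (x:ℂ)).re with hgdef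
  set g1 : ℝ → ℝ := fun x => (deriv f (x:ℂ)).re with hg1def
  have hdf : Differentiable ℂ (deriv f) := by
    have h1 : AnalyticOnNhd ℂ f Set.univ := hf.differentiableOn.analyticOnNhd isOpen_univ
    exact fun z => ((h1.deriv) z trivial).differentiableAt
  have hAre : ∀ x : ℝ, A (x:ℂ) = ((q x : ℝ) : ℂ) := by
    intro x
    rw [hA, ← Complex.ofReal_exp, aux_aeval_ofReal]
  have hodef : ∀ z, deriv (deriv f) z = -(A z * f z) := fun z =>
    eq_neg_of_add_eq_zero_left (hode z)
  have hg : ∀ x : ℝ, HasDerivAt g (g1 x) x := by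
    intro x
    have h1 : HasDerivAt (fun y : ℝ => f (y : ℂ)) (deriv f (x : ℂ)) x :=
      (hf (x : ℂ)).hasDerivAt.comp_ofReal
    have h2 := Complex.reCLM.hasFDerivAt.comp_hasDerivAt x h1
    exact h2
  have hg1 : ∀ x : ℝ, HasDerivAt g1 (-(q x * g x)) x := by
    intro x
    have h1 : HasDerivAt (fun y : ℝ => deriv f (y : ℂ)) (deriv (deriv f) (x : ℂ)) x :=
      (hdf (x : ℂ)).hasDerivAt.comp_ofReal
    have h2 := Complex.reCLM.hasFDerivAt.comp_hasDerivAt x h1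
    have h3 : (deriv (deriv f) (x:ℂ)).re = -(q x * g x) := by
      rw [hodef, hAre]
      simp [hgdef]
    rw [← h3]
    exact h2
  have hq : ∀ x : ℝ, a ≤ x → k ^ 2 ≤ q x := by
    intro x hx
    have hx0' : x₀ ≤ x := le_trans (le_trans (le_max_left x₀ 0) ha1) hx
    have h1 := hx₀ x hx0'
    have h2 : Real.exp ((n:ℝ) * a) ≤ Real.exp ((n:ℝ) * x) := by
      apply Real.exp_le_exp.mpr
      have hnn : (0:ℝ) ≤ (n:ℝ) := Nat.cast_nonneg n
      nlinarith
    rw [hksq]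
    calc c/2 * Real.exp ((n:ℝ)*a) ≤ c/2 * Real.exp ((n:ℝ)*x) := by nlinarith
      _ ≤ q x := h1
  have key : ∀ j : ℕ, ∃ x, x ∈ Set.Icc (a + (2*(j:ℝ)) * (π/k)) (a + (2*(j:ℝ)) * (π/k) + π/k)
      ∧ g x = 0 := by
    intro j
    apply aux_sturm g g1 q hg hg1 (a + (2*(j:ℝ)) * (π/k)) k hk
    intro x hx
    apply hq
    have h0 : 0 ≤ (2*(j:ℝ)) * (π/k) := by positivity
    linarith [hx.1]
  choose z hz1 hz2 using key
  set M := ⌊k / (2*π)⌋₊ with hMdef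
  set T := (M + 1) / 2 with hTdef
  have hMle : (M:ℝ) ≤ k / (2*π) := Nat.floor_le (by positivity)
  have hMgt : k / (2*π) - 1 < (M:ℝ) := Nat.sub_one_lt_floor _
  clear_value M
  have hMhalf : (M:ℝ) * (π/k) ≤ 1/2 := by
    have h1 : (M:ℝ) * (π/k) ≤ (k/(2*π)) * (π/k) := mul_le_mul_of_nonneg_right hMle hπk.le
    have h2 : (k/(2*π)) * (π/k) = 1/2 := by
      field_simp
    linarith
  have hfval : ∀ x : ℝ, f (x:ℂ) = ((g x : ℝ) : ℂ) := by
    intro x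
    apply Complex.ext
    · simp [hgdef]
    · simp [him x]
  clear_value x₁ k0 a k q g g1
  have hzmem : ∀ j : ℕ, j < T → z j ∈ {x : ℝ | x ∈ Set.Ico 0 r ∧ f (x:ℂ) = 0} := by
    intro j hj
    have hj2 : 2*j + 1 ≤ M := by omega
    obtain ⟨hl, hu⟩ := hz1 j
    refine ⟨⟨?_, ?_⟩, ?_⟩
    · have h0 : 0 ≤ (2*(j:ℝ)) * (π/k) := by positivity
      linarith
    · have hcast : (2*(j:ℝ) + 1) ≤ (M:ℝ) := by exact_mod_cast hj2
      have h5 : (2*(j:ℝ)+1) * (π/k) ≤ (M:ℝ) * (π/k) := mul_le_mul_of_nonneg_right hcast hπk.le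
      have heq : a + (2*(j:ℝ)) * (π/k) + π/k = a + (2*(j:ℝ)+1) * (π/k) := by ring
      linarith [hu, heq, h5, hMhalf, hadef.le, hadef.ge]
    · rw [hfval, hz2 j]
      simp
  have hzlt : ∀ i j : ℕ, i < j → z i < z j := by
    intro i j hij
    have h1 := (hz1 i).2
    have h2 := (hz1 j).1
    have hij' : 2*(i:ℝ) + 2 ≤ 2*(j:ℝ) := by
      have : (i:ℝ) + 1 ≤ (j:ℝ) := by exact_mod_cast hij
      linarith
    have hh := mul_le_mul_of_nonneg_right hij' hπk.le
    have heq1 : (2*(i:ℝ) + 2) * (π/k) = (2*(i:ℝ)) * (π/k) + 2 * (π/k) := by ring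
    have heq2 : (2*(j:ℝ)) * (π/k) = (2*(j:ℝ)) * (π/k) := rfl
    linarith [hπk]
  have hSfin := aux_zeros_finite f hf hfne r
  have hsub : Set.range (fun j : Fin T => z (j:ℕ)) ⊆
      {x : ℝ | x ∈ Set.Ico 0 r ∧ f (x:ℂ) = 0} := by
    rintro _ ⟨j, rfl⟩
    exact hzmem j j.isLt
  have hinj : Function.Injective (fun j : Fin T => z (j:ℕ)) := by
    intro i j hij
    by_contra hne'
    rcases Ne.lt_or_gt hne' with h | h
    · exact absurd hij (ne_of_lt (hzlt i j h))
    · exact absurd hij.symm (ne_of_lt (hzlt j i h))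
  have hcard : (Set.range (fun j : Fin T => z (j:ℕ))).ncard = T := by
    rw [← Set.image_univ, Set.ncard_image_of_injective _ hinj, Set.ncard_univ,
      Nat.card_eq_fintype_card, Fintype.card_fin]
  have hTle : (T:ℝ) ≤ ({x : ℝ | x ∈ Set.Ico 0 r ∧ f (x:ℂ) = 0}.ncard : ℝ) := by
    have := Set.ncard_le_ncard hsub hSfin
    rw [hcard] at this
    exact_mod_cast this
  have hTM : (M:ℝ) ≤ 2 * (T:ℝ) := by exact_mod_cast (by omega : M ≤ 2 * T)
  have hCr : k0 * Real.exp (-(n:ℝ)/2) / (8 * π) * Real.exp ((n:ℝ) * r / 2) = k / (8*π) := by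
    rw [hkdef, div_mul_eq_mul_div, mul_assoc, ← Real.exp_add]
    have : -(n:ℝ)/2 + (n:ℝ) * r / 2 = (n:ℝ) * a / 2 := by rw [hadef]; ring
    rw [this]
  rw [hCr]
  have h6 : k < ((M:ℝ) + 1) * (2*π) := by
    have h7 : k/(2*π) < (M:ℝ) + 1 := by linarith
    calc k = (k/(2*π)) * (2*π) := by field_simp
      _ < ((M:ℝ)+1) * (2*π) := mul_lt_mul_of_pos_right h7 (by positivity)
  have hfin : k / (8*π) ≤ (T:ℝ) := by
    rw [div_le_iff₀ (by positivity)]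
    nlinarith [mul_le_mul_of_nonneg_right hTM hπ.le]
  linarith
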